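/- Let C_φ be a bounded normal composition operator on L²(μ). Then C_φ is quasi-m-isometric if and only if h(h-1)^m = 0 μ-a.e., if and only if h(h-1) = 0 μ-a.e., if and only if C_φ is quasi-isometric (C_φ*²C_φ² = C_φ*C_φ). -/

import Mathlib

open ContinuousLinearMap Finset MeasureTheory

section Aux

variable {X : Type*} [MeasurableSpace X] {μ : Measure X}

/-- Coercion of a finset sum in `Lp` agrees a.e. with the pointwise sum. -/
lemma lp_coeFn_sum {ι : Type*} (s : Finset ι) (u : ι → Lp ℂ 2 μ) :
    ⇑(∑ i ∈ s, u i) =ᵐ[μ] fun x => ∑ i ∈ s, u i x := by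
  classical
  induction s using Finset.induction_on with
  | empty => simp only [Finset.sum_empty]; exact Lp.coeFn_zero (E := ℂ) (p := 2) (μ := μ)
  | insert _ _ hnot ih =>
    rename_i a s
    rw [Finset.sum_insert hnot]
    filter_upwards [Lp.coeFn_add (u a) (∑ i ∈ s, u i), ih] with x hx1 hx2
    simp only [Finset.sum_insert hnot, hx1, Pi.add_apply, hx2]

/-- If multiplication by `g` kills every `L²` function a.e., then `g = 0` a.e. -/
lemma ae_zero_of_mul_ae_zero [SigmaFinite μ] (g : X → ℂ)
    (hg : ∀ f : Lp ℂ 2 μ, (fun x => g x * f x) =ᵐ[μ] 0) : g =ᵐ[μ] 0 := by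
  have key : ∀ n : ℕ, (fun x => g x * (spanningSets μ n).indicator (fun _ => (1 : ℂ)) x)
      =ᵐ[μ] 0 := by
    intro n
    have hf := hg (indicatorConstLp 2 (measurableSet_spanningSets μ n)
      (measure_spanningSets_lt_top μ n).ne (1 : ℂ))
    filter_upwards [hf, indicatorConstLp_coeFn (p := 2)
      (hs := measurableSet_spanningSets μ n)
      (hμs := (measure_spanningSets_lt_top μ n).ne) (c := (1 : ℂ))] with x hx1 hx2
    rw [← hx2]; exact hx1
  have hall : ∀ᵐ x ∂μ, ∀ n : ℕ,
      g x * (spanningSets μ n).indicator (fun _ => (1 : ℂ)) x = 0 :=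
    ae_all_iff.mpr key
  filter_upwards [hall] with x hx
  obtain ⟨n, hn⟩ : ∃ n, x ∈ spanningSets μ n := by
    have := iUnion_spanningSets μ
    have hx' : x ∈ ⋃ n, spanningSets μ n := by rw [this]; trivial
    exact Set.mem_iUnion.mp hx'
  have := hx n
  rw [Set.indicator_of_mem hn] at this
  simpa using this

/-- Powers of a "multiplication-like" operator act as multiplication by powers. -/
lemma pow_mul_ae {h : X → ℝ} {A : Lp ℂ 2 μ →L[ℂ] Lp ℂ 2 μ}
    (hA : ∀ f : Lp ℂ 2 μ, ⇑(A f) =ᵐ[μ] fun x => (h x : ℂ) * f x) (k : ℕ)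
    (f : Lp ℂ 2 μ) : ⇑((A ^ k) f) =ᵐ[μ] fun x => (h x : ℂ) ^ k * f x := by
  induction k with
  | zero => simp
  | succ n ih =>
    have : (A ^ (n + 1)) f = A ((A ^ n) f) := by
      rw [pow_succ', ContinuousLinearMap.mul_apply]
    rw [this]
    filter_upwards [hA ((A ^ n) f), ih] with x hx1 hx2
    rw [hx1, hx2]; ring

lemma scalar_sum_eq (m : ℕ) (t : ℂ) :
    ∑ k ∈ range (m + 1), ((-1 : ℂ) ^ (m - k) * (m.choose k : ℂ)) * t ^ (k + 1)
      = t * (t - 1) ^ m := by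
  rw [sub_pow, Finset.mul_sum]
  refine Finset.sum_congr rfl fun k hk => ?_
  rw [Finset.mem_range] at hk
  have hpar : (-1 : ℂ) ^ (m - k) = (-1) ^ (k + m) := by
    rw [show k + m = (m - k) + 2 * k by omega, pow_add, pow_mul]
    simp
  rw [hpar]
  ring

end Aux

/-- For a bounded normal composition operator C_φ on L²(μ) with C_φ*C_φ = M_h:
C_φ is quasi-m-isometric iff h(h-1)^m = 0 a.e. iff h(h-1) = 0 a.e. iff C_φ is
quasi-isometric (C_φ*²C_φ² = C_φ*C_φ). -/
theorem stmt_14 {X : Type*} [MeasurableSpace X] (μ : Measure X) [SigmaFinite μ]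
    (h : X → ℝ) (C : Lp ℂ 2 μ →L[ℂ] Lp ℂ 2 μ)
    (hnormal : adjoint C * C = C * adjoint C)
    (hC : ∀ f : Lp ℂ 2 μ, ⇑((adjoint C * C) f) =ᵐ[μ] fun x => (h x : ℂ) * f x)
    (m : ℕ) (hm : 1 ≤ m) :
    ((∑ k ∈ range (m + 1),
        ((-1 : ℂ) ^ (m - k) * (m.choose k : ℂ)) •
          ((adjoint C) ^ (k + 1) * C ^ (k + 1)) = 0)
      ↔ (∀ᵐ x ∂μ, h x * (h x - 1) ^ m = 0)) ∧
    ((∀ᵐ x ∂μ, h x * (h x - 1) ^ m = 0) ↔ (∀ᵐ x ∂μ, h x * (h x - 1) = 0)) ∧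
    ((∀ᵐ x ∂μ, h x * (h x - 1) = 0)
      ↔ (adjoint C) ^ 2 * C ^ 2 = adjoint C * C) := by
  set A := adjoint C * C with hA
  have hcomm : Commute (adjoint C) C := hnormal
  have hpow : ∀ n : ℕ, (adjoint C) ^ n * C ^ n = A ^ n := fun n =>
    (hcomm.mul_pow n).symm
  -- powers of A act as multiplication by powers of h
  have hAk : ∀ (k : ℕ) (f : Lp ℂ 2 μ),
      ⇑((A ^ k) f) =ᵐ[μ] fun x => (h x : ℂ) ^ k * f x := pow_mul_ae hC
  -- cast facts
  have cast1 : ∀ x, ((h x * (h x - 1) ^ m : ℝ) : ℂ)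
      = (h x : ℂ) * ((h x : ℂ) - 1) ^ m := by intro x; push_cast; ring
  have cast2 : ∀ x, ((h x * (h x - 1) : ℝ) : ℂ)
      = (h x : ℂ) * ((h x : ℂ) - 1) := by intro x; push_cast; ring
  refine ⟨?_, ?_, ?_⟩
  · -- first iff
    set S : Lp ℂ 2 μ →L[ℂ] Lp ℂ 2 μ :=
      ∑ k ∈ range (m + 1),
        ((-1 : ℂ) ^ (m - k) * (m.choose k : ℂ)) • ((adjoint C) ^ (k + 1) * C ^ (k + 1))
      with hS
    have hSf : ∀ f : Lp ℂ 2 μ,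
        ⇑(S f) =ᵐ[μ] fun x => ((h x : ℂ) * ((h x : ℂ) - 1) ^ m) * f x := by
      intro f
      have h1 : S f = ∑ k ∈ range (m + 1),
          (((-1 : ℂ) ^ (m - k) * (m.choose k : ℂ)) •
            ((adjoint C) ^ (k + 1) * C ^ (k + 1))) f := by
        rw [hS]; exact ContinuousLinearMap.sum_apply _ _ _
      rw [h1]
      refine (lp_coeFn_sum _ _).trans ?_
      have h2 : ∀ k ∈ range (m + 1),
          ⇑((((-1 : ℂ) ^ (m - k) * (m.choose k : ℂ)) •
            ((adjoint C) ^ (k + 1) * C ^ (k + 1))) f)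
          =ᵐ[μ] fun x =>
            ((-1 : ℂ) ^ (m - k) * (m.choose k : ℂ)) * ((h x : ℂ) ^ (k + 1) * f x) := by
        intro k _
        rw [ContinuousLinearMap.smul_apply, hpow (k + 1)]
        filter_upwards [Lp.coeFn_smul ((-1 : ℂ) ^ (m - k) * (m.choose k : ℂ))
          ((A ^ (k + 1)) f), hAk (k + 1) f] with x hx1 hx2
        rw [hx1, Pi.smul_apply, hx2, smul_eq_mul]
      have h3 : ∀ᵐ x ∂μ, ∀ k ∈ range (m + 1),
          (((((-1 : ℂ) ^ (m - k) * (m.choose k : ℂ)) •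
            ((adjoint C) ^ (k + 1) * C ^ (k + 1))) f) : Lp ℂ 2 μ) x
          = ((-1 : ℂ) ^ (m - k) * (m.choose k : ℂ)) * ((h x : ℂ) ^ (k + 1) * f x) := by
        refine (Filter.eventually_all_finset _).2 fun k hk => h2 k hk
      filter_upwards [h3] with x hx
      rw [Finset.sum_congr rfl hx]
      have := scalar_sum_eq m (h x : ℂ)
      calc ∑ k ∈ range (m + 1),
            ((-1 : ℂ) ^ (m - k) * (m.choose k : ℂ)) * ((h x : ℂ) ^ (k + 1) * f x)
          = (∑ k ∈ range (m + 1),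
            ((-1 : ℂ) ^ (m - k) * (m.choose k : ℂ)) * (h x : ℂ) ^ (k + 1)) * f x := by
            rw [Finset.sum_mul]; exact Finset.sum_congr rfl fun k _ => by ring
        _ = ((h x : ℂ) * ((h x : ℂ) - 1) ^ m) * f x := by rw [this]
    constructor
    · intro hzero
      have hg : ∀ f : Lp ℂ 2 μ,
          (fun x => ((h x : ℂ) * ((h x : ℂ) - 1) ^ m) * f x) =ᵐ[μ] 0 := by
        intro f
        refine (hSf f).symm.trans ?_
        rw [hzero]
        simpa using Lp.coeFn_zero (E := ℂ) (p := 2) (μ := μ)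
      have := ae_zero_of_mul_ae_zero _ hg
      filter_upwards [this] with x hx
      have : ((h x * (h x - 1) ^ m : ℝ) : ℂ) = 0 := by rw [cast1 x]; exact hx
      exact_mod_cast this
    · intro hae
      have hG : (fun x => (h x : ℂ) * ((h x : ℂ) - 1) ^ m) =ᵐ[μ] 0 := by
        filter_upwards [hae] with x hx
        rw [← cast1 x, hx]; simp
      refine ContinuousLinearMap.ext fun f => ?_
      rw [ContinuousLinearMap.zero_apply, Lp.eq_zero_iff_ae_eq_zero]
      filter_upwards [hSf f, hG] with x hx1 hx2
      rw [hx1]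
      simp only [Pi.zero_apply] at hx2 ⊢
      rw [hx2, zero_mul]
  · -- second iff: pointwise real equivalence
    constructor
    · intro hae
      filter_upwards [hae] with x hx
      rcases mul_eq_zero.mp hx with h0 | h0
      · rw [h0, zero_mul]
      · have : h x - 1 = 0 := by
          exact pow_eq_zero_iff (Nat.one_le_iff_ne_zero.mp hm) |>.mp h0
        rw [this, mul_zero]
    · intro hae
      filter_upwards [hae] with x hx
      rcases mul_eq_zero.mp hx with h0 | h0
      · rw [h0, zero_mul]
      · rw [h0, zero_pow (Nat.one_le_iff_ne_zero.mp hm), mul_zero]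
  · -- third iff
    rw [hpow 2]
    constructor
    · intro hae
      refine ContinuousLinearMap.ext fun f => ?_
      rw [← sub_eq_zero, Lp.eq_zero_iff_ae_eq_zero]
      filter_upwards [Lp.coeFn_sub ((A ^ 2) f) (A f), hAk 2 f, hC f, hae]
        with x h0 h2 h1 hxa
      simp only [Pi.zero_apply]
      rw [h0, Pi.sub_apply, h2, h1]
      have hc : ((h x : ℂ) * ((h x : ℂ) - 1)) = 0 := by
        rw [← cast2 x]; exact_mod_cast hxa
      calc (h x : ℂ) ^ 2 * f x - (h x : ℂ) * f x
          = ((h x : ℂ) * ((h x : ℂ) - 1)) * f x := by ring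
        _ = 0 := by rw [hc, zero_mul]
    · intro hop
      have hg : ∀ f : Lp ℂ 2 μ,
          (fun x => ((h x : ℂ) * ((h x : ℂ) - 1)) * f x) =ᵐ[μ] 0 := by
        intro f
        have heq : (A ^ 2) f = A f := by rw [hop]
        have hf2 := hAk 2 f
        have hf1 := hC f
        filter_upwards [hf2, hf1] with x hx2 hx1
        have : (h x : ℂ) ^ 2 * f x = (h x : ℂ) * f x := by
          rw [← hx2, ← hx1, heq]
        simp only [Pi.zero_apply]
        calc ((h x : ℂ) * ((h x : ℂ) - 1)) * f x
            = (h x : ℂ) ^ 2 * f x - (h x : ℂ) * f x := by ring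
          _ = 0 := by rw [this, sub_self]
      have := ae_zero_of_mul_ae_zero _ hg
      filter_upwards [this] with x hx
      have : ((h x * (h x - 1) : ℝ) : ℂ) = 0 := by rw [cast2 x]; exact hx
      exact_mod_cast this
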